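/- The element Q̃(f̂) is the Chebyshev center of Q̃(C_y): for every z ∈ Z, lwce_y(z) ≥ lwce_y(Q̃ f̂), and the squared Chebyshev radius equals lwce_y(Q̃ f̂)² = λ_max · (1 − ‖T f̂‖²) = ‖Q̃ ĥ‖². -/

import Mathlib

open scoped ENNReal

/-- one-hyperellipsoid Chebyshev center: `Q̃ f̂` is the Chebyshev
center of `Q̃(C_y)` and the squared Chebyshev radius equals
`λ_max · (1 − ‖T f̂‖²) = ‖Q̃ ĥ‖²`. -/
theorem statement11
    {F G Z : Type*}
    [NormedAddCommGroup F] [InnerProductSpace ℝ F] [FiniteDimensional ℝ F]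
    [NormedAddCommGroup G] [InnerProductSpace ℝ G] [FiniteDimensional ℝ G]
    [NormedAddCommGroup Z] [InnerProductSpace ℝ Z] [FiniteDimensional ℝ Z]
    {m : ℕ}
    (T : F →ₗ[ℝ] G) (Qt : F →ₗ[ℝ] Z) (Λ : F →ₗ[ℝ] (Fin m → ℝ))
    (hker : LinearMap.ker T ⊓ LinearMap.ker Λ = ⊥)
    (y : Fin m → ℝ)
    (hCne : {f : F | ‖T f‖ ≤ 1 ∧ Λ f = y}.Nonempty)
    -- `f̂` is the minimal-`‖T·‖` data-consistent element
    (fhat : F) (hfhatΛ : Λ fhat = y)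
    (hfhatmin : ∀ g : F, Λ g = y → ‖T fhat‖ ^ 2 ≤ ‖T g‖ ^ 2)
    -- `λ_max` is the largest value of the quotient `‖Q̃h‖²/‖Th‖²` over `ker Λ ∖ {0}`,
    -- attained at the normalized maximizer `ĥ`
    (lamMax : ℝ)
    (hlam : ∀ h ∈ LinearMap.ker Λ, ‖Qt h‖ ^ 2 ≤ lamMax * ‖T h‖ ^ 2)
    (hhat : F) (hhatmem : hhat ∈ LinearMap.ker Λ)
    (hhatattain : ‖Qt hhat‖ ^ 2 = lamMax * ‖T hhat‖ ^ 2)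
    (hhatnorm : ‖T hhat‖ ^ 2 = 1 - ‖T fhat‖ ^ 2) :
    (∀ z : Z,
      (⨆ f ∈ {f : F | ‖T f‖ ≤ 1 ∧ Λ f = y}, ENNReal.ofReal ‖Qt f - Qt fhat‖) ≤
        ⨆ f ∈ {f : F | ‖T f‖ ≤ 1 ∧ Λ f = y}, ENNReal.ofReal ‖Qt f - z‖) ∧
    (⨆ f ∈ {f : F | ‖T f‖ ≤ 1 ∧ Λ f = y}, ENNReal.ofReal ‖Qt f - Qt fhat‖) ^ 2 =
      ENNReal.ofReal (lamMax * (1 - ‖T fhat‖ ^ 2)) ∧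
    (⨆ f ∈ {f : F | ‖T f‖ ≤ 1 ∧ Λ f = y}, ENNReal.ofReal ‖Qt f - Qt fhat‖) ^ 2 =
      ENNReal.ofReal (‖Qt hhat‖ ^ 2) := by
  classical
  -- orthogonality from minimality
  have orth : ∀ h : F, Λ h = 0 → inner ℝ (T fhat) (T h) = (0 : ℝ) := by
    intro h hh
    set a : ℝ := inner ℝ (T fhat) (T h) with ha
    set b : ℝ := ‖T h‖ ^ 2 with hb
    have hbnn : 0 ≤ b := by positivity
    have key : ∀ t : ℝ, 0 ≤ 2 * t * a + t ^ 2 * b := by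
      intro t
      have h1 := hfhatmin (fhat + t • h) (by simp [map_add, map_smul, hfhatΛ, hh])
      have h2 : ‖T (fhat + t • h)‖ ^ 2
          = ‖T fhat‖ ^ 2 + 2 * t * a + t ^ 2 * b := by
        rw [map_add, map_smul, @norm_add_sq_real, real_inner_smul_right,
          norm_smul]
        simp [mul_pow, hb]
        ring
      rw [h2] at h1
      linarith
    rcases eq_or_lt_of_le hbnn with hb0 | hb0
    · have h1 := key 1
      have h2 := key (-1)
      nlinarith
    · have h1 := key (-a / b)
      have h2 : 2 * (-a / b) * a + (-a / b) ^ 2 * b = -(a ^ 2 / b) := by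
        field_simp
        ring
      rw [h2] at h1
      have h3 : a ^ 2 / b ≤ 0 := by linarith
      have h4 : 0 ≤ a ^ 2 / b := div_nonneg (sq_nonneg a) hbnn
      have h6 : a ^ 2 / b = 0 := le_antisymm h3 h4
      field_simp at h6
      exact pow_eq_zero_iff (n := 2) (by norm_num) |>.mp (by simpa using h6)
  have pyth : ∀ h : F, Λ h = 0 →
      ‖T (fhat + h)‖ ^ 2 = ‖T fhat‖ ^ 2 + ‖T h‖ ^ 2 := by
    intro h hh
    rw [map_add, @norm_add_sq_real, orth h hh]
    ring
  have hhh0 : Λ hhat = 0 := hhatmem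
  set C : Set F := {f : F | ‖T f‖ ≤ 1 ∧ Λ f = y} with hC
  have normone : ∀ h : F, Λ h = 0 → ‖T h‖ ^ 2 = 1 - ‖T fhat‖ ^ 2 →
      fhat + h ∈ C := by
    intro h hh hn
    refine ⟨?_, by simp [map_add, hfhatΛ, hh]⟩
    have := pyth h hh
    nlinarith [norm_nonneg (T (fhat + h))]
  have hplus : fhat + hhat ∈ C := normone hhat hhh0 hhatnorm
  have hminus : fhat + (-hhat) ∈ C := by
    refine normone (-hhat) (by simp [hhh0]) ?_
    rw [map_neg, norm_neg]; exact hhatnorm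
  have hQnn : (0 : ℝ) ≤ ‖Qt hhat‖ := norm_nonneg _
  -- the uniform bound on C
  have bound : ∀ f ∈ C, ‖Qt f - Qt fhat‖ ≤ ‖Qt hhat‖ := by
    intro f hf
    have hΛ : Λ (f - fhat) = 0 := by simp [map_sub, hf.2, hfhatΛ]
    have h1 : ‖Qt (f - fhat)‖ ^ 2 ≤ lamMax * ‖T (f - fhat)‖ ^ 2 := hlam _ hΛ
    have h2 : ‖T (f - fhat)‖ ^ 2 ≤ 1 - ‖T fhat‖ ^ 2 := by
      have hp := pyth (f - fhat) hΛ
      have heq : fhat + (f - fhat) = f := by abel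
      rw [heq] at hp
      have hf1 : ‖T f‖ ≤ 1 := hf.1
      nlinarith [norm_nonneg (T f)]
    have h5 : 0 ≤ lamMax * (1 - ‖T fhat‖ ^ 2) := by
      rw [← hhatnorm, ← hhatattain]; positivity
    have hsq : ‖Qt (f - fhat)‖ ^ 2 ≤ ‖Qt hhat‖ ^ 2 := by
      rw [hhatattain, hhatnorm]
      rcases le_or_gt 0 lamMax with hl | hl
      · nlinarith
      · have hT0 : ‖T (f - fhat)‖ ^ 2 = 0 := by
          nlinarith [sq_nonneg ‖Qt (f - fhat)‖, sq_nonneg ‖T (f - fhat)‖]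
        nlinarith [sq_nonneg ‖Qt (f - fhat)‖]
    have hsub : ‖Qt f - Qt fhat‖ = ‖Qt (f - fhat)‖ := by rw [map_sub]
    rw [hsub]
    have := Real.sqrt_le_sqrt hsq
    rwa [Real.sqrt_sq (norm_nonneg _), Real.sqrt_sq (norm_nonneg _)] at this
  -- the supremum equals ‖Qt hhat‖
  have hS : (⨆ f ∈ C, ENNReal.ofReal ‖Qt f - Qt fhat‖)
      = ENNReal.ofReal ‖Qt hhat‖ := by
    apply le_antisymm
    · exact iSup₂_le fun f hf => ENNReal.ofReal_le_ofReal (bound f hf)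
    · refine le_iSup₂_of_le (fhat + hhat) hplus (le_of_eq ?_)
      congr 1
      rw [map_add]
      simp
  refine ⟨?_, ?_, ?_⟩
  · intro z
    rw [hS]
    have key : ‖Qt hhat‖ ≤
        max ‖Qt (fhat + hhat) - z‖ ‖Qt (fhat + (-hhat)) - z‖ := by
      have tri : ‖(Qt (fhat + hhat) - z) - (Qt (fhat + (-hhat)) - z)‖
          ≤ ‖Qt (fhat + hhat) - z‖ + ‖Qt (fhat + (-hhat)) - z‖ :=
        norm_sub_le _ _
      have heq : (Qt (fhat + hhat) - z) - (Qt (fhat + (-hhat)) - z)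
          = (2 : ℝ) • Qt hhat := by
        rw [map_add, map_add, map_neg, two_smul]
        abel
      rw [heq, norm_smul] at tri
      simp only [Real.norm_ofNat] at tri
      rcases max_cases ‖Qt (fhat + hhat) - z‖ ‖Qt (fhat + (-hhat)) - z‖ with
        ⟨h1, h2⟩ | ⟨h1, h2⟩ <;> rw [h1] <;> linarith
    rcases le_max_iff.mp key with h | h
    · exact le_trans (ENNReal.ofReal_le_ofReal h)
        (le_iSup₂_of_le (fhat + hhat) hplus le_rfl)
    · exact le_trans (ENNReal.ofReal_le_ofReal h)
        (le_iSup₂_of_le (fhat + (-hhat)) hminus le_rfl)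
  · rw [hS, ← ENNReal.ofReal_pow hQnn, hhatattain, hhatnorm]
  · rw [hS, ← ENNReal.ofReal_pow hQnn]
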